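/- Let a and b be strings of lengths n and m over an alphabet Σ, let 0 < γ < 1, and let ã and b̃ be obtained from a and b by deleting the terms at index sets D_a ⊆ {1,…,n} and D_b ⊆ {1,…,m} with |D_a| + |D_b| ≤ ⌊γ(n+m)⌋. If there exists a best possible match I between a and b (that is, a match realizing the supremum in the definition of f̄(a,b)) such that no deleted term is matched by I with a non-deleted term (i.e., for every (i, j) ∈ I, i ∈ D_a if and only if j ∈ D_b), then f̄(a, b) ≥ f̄(ã, b̃) − γ. -/

import Mathlib

open MeasureTheory

namespace Paper

variable {σ : Type*}

/-- The concatenation of `t` copies of the string `w`. -/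
def rep (w : List σ) (t : ℕ) : List σ := (List.replicate t w).flatten

/-- `I` is a match between the strings `a` and `b` (with 0-based indices):
a collection of pairs of indices, strictly increasing in both coordinates,
pairing equal symbols. -/
def IsMatch (a b : List σ) (I : List (ℕ × ℕ)) : Prop :=
  I.Chain' (fun p q => p.1 < q.1 ∧ p.2 < q.2) ∧
  ∀ p ∈ I, p.1 < a.length ∧ p.2 < b.length ∧ a[p.1]? = b[p.2]?

/-- The largest cardinality of a match between `a` and `b`. -/
noncomputable def maxMatch (a b : List σ) : ℕ :=
  sSup {r | ∃ I, IsMatch a b I ∧ I.length = r}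

/-- The `f̄` distance between two strings. -/
noncomputable def fbar (a b : List σ) : ℝ :=
  1 - 2 * (maxMatch a b : ℝ) / (a.length + b.length)

/-- `I` is an approximate match between the strings `a` and `b` (0-based indices):
pairs of indices, nondecreasing in each coordinate and strictly increasing as pairs,
pairing equal symbols, such that the set of indices paired with any given index is
contained in a set of three consecutive indices. -/
def IsApproxMatch (a b : List σ) (I : List (ℕ × ℕ)) : Prop :=
  I.Chain' (fun p q => p.1 ≤ q.1 ∧ p.2 ≤ q.2 ∧ p ≠ q) ∧
  (∀ p ∈ I, p.1 < a.length ∧ p.2 < b.length ∧ a[p.1]? = b[p.2]?) ∧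
  (∀ p ∈ I, (∃ s, ∀ q ∈ I, q.1 = p.1 → q.2 ∈ ({s, s+1, s+2} : Set ℕ)) ∧
            (∃ t, ∀ q ∈ I, q.2 = p.2 → q.1 ∈ ({t, t+1, t+2} : Set ℕ)))

/-- The largest cardinality of an approximate match between `a` and `b`. -/
noncomputable def maxApproxMatch (a b : List σ) : ℕ :=
  sSup {r | ∃ I, IsApproxMatch a b I ∧ I.length = r}

/-- The approximate distance `f̃` between two strings. -/
noncomputable def ftilde (a b : List σ) : ℝ :=
  max 0 (1 - 2 * (maxApproxMatch a b : ℝ) / (a.length + b.length))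

end Paper

open Paper List

/-- The string obtained from `a` by deleting the terms whose (0-based) index lies in `D`. -/
def deleteAt {σ : Type*} (a : List σ) (D : Finset ℕ) : List σ :=
  (((List.range a.length).zip a).filter fun p => decide (p.1 ∉ D)).map Prod.snd

section AuxStatement1

open List

private def idxsL (n : ℕ) (D : Finset ℕ) : List ℕ :=
  (List.range n).filter (fun i => decide (i ∉ D))

private def embD (D : Finset ℕ) (i : ℕ) : ℕ :=
  ((List.range i).filter (fun j => decide (j ∉ D))).length

private lemma idxsL_decomp {n i : ℕ} {D : Finset ℕ} (h : i < n) (hi : i ∉ D) :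
    ∃ l2, idxsL n D = idxsL i D ++ i :: l2 := by
  obtain ⟨s, rfl⟩ : ∃ s, n = i + (s + 1) := ⟨n - i - 1, by omega⟩
  refine ⟨(((List.range s).map (fun x => i + Nat.succ x)).filter (fun j => decide (j ∉ D))), ?_⟩
  rw [idxsL, List.range_add, List.filter_append, List.range_succ_eq_map, List.map_cons,
    List.filter_cons]
  simp [hi, idxsL, Function.comp_def]

private lemma embD_length {i : ℕ} {D : Finset ℕ} : embD D i = (idxsL i D).length := rfl

private lemma idxsL_getElem_embD {n i : ℕ} {D : Finset ℕ} (h : i < n) (hi : i ∉ D) :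
    (idxsL n D)[embD D i]? = some i := by
  obtain ⟨l2, hl2⟩ := idxsL_decomp h hi
  rw [hl2, embD_length, List.getElem?_append_right le_rfl]
  simp

private lemma embD_lt_length {n i : ℕ} {D : Finset ℕ} (h : i < n) (hi : i ∉ D) :
    embD D i < (idxsL n D).length := by
  obtain ⟨l2, hl2⟩ := idxsL_decomp h hi
  rw [hl2, List.length_append, embD_length]
  simp

private lemma embD_strictMono {i j : ℕ} {D : Finset ℕ} (h : i < j) (hi : i ∉ D) :
    embD D i < embD D j := by
  have := embD_lt_length h hi
  rwa [← embD_length] at this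

private lemma length_le_card {l : List ℕ} {S : Finset ℕ} (hnd : l.Nodup) (h : ∀ x ∈ l, x ∈ S) :
    l.length ≤ S.card := by
  classical
  rw [← List.toFinset_card_of_nodup hnd]
  exact Finset.card_le_card (fun x hx => h x (List.mem_toFinset.mp hx))

private lemma idxsL_length {n : ℕ} {D : Finset ℕ} (hD : ∀ i ∈ D, i < n) :
    (idxsL n D).length = n - D.card := by
  classical
  have hsplit := List.length_eq_length_filter_add (l := List.range n) (fun i => decide (i ∉ D))
  rw [List.length_range] at hsplit
  have h2 : ((List.range n).filter (fun i => !decide (i ∉ D))).length = D.card := by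
    have hnd : ((List.range n).filter (fun i => !decide (i ∉ D))).Nodup :=
      List.nodup_range.filter _
    rw [← List.toFinset_card_of_nodup hnd]
    congr 1
    ext x
    simp only [List.mem_toFinset, List.mem_filter, List.mem_range, Bool.not_eq_true',
      decide_eq_false_iff_not, not_not]
    exact ⟨fun h => h.2, fun h => ⟨hD x h, h⟩⟩
  rw [idxsL]
  omega

end AuxStatement1

section AuxDeleteAt

private lemma map_fst_filter_enum {σ : Type*} (a : List σ) (D : Finset ℕ) :
    (((List.range a.length).zip a).filter fun p => decide (p.1 ∉ D)).map Prod.fst = idxsL a.length D := by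
  have hz : ((List.range a.length).zip a).map Prod.fst = List.range a.length := by
    simp [List.map_fst_zip]
  rw [idxsL]
  conv_rhs => rw [← hz]
  rw [List.filter_map]
  rfl

private lemma length_deleteAt_eq {σ : Type*} (a : List σ) (D : Finset ℕ) :
    (deleteAt a D).length = (idxsL a.length D).length := by
  rw [deleteAt, List.length_map, ← map_fst_filter_enum a D, List.length_map]

private lemma deleteAt_getElem? {σ : Type*} (a : List σ) (D : Finset ℕ) {k i : ℕ}
    (hk : (idxsL a.length D)[k]? = some i) : (deleteAt a D)[k]? = a[i]? := by
  rw [← map_fst_filter_enum a D] at hk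
  rw [List.getElem?_map] at hk
  obtain ⟨p, hp, hpi⟩ := Option.map_eq_some_iff.mp hk
  have hpmem : p ∈ ((List.range a.length).zip a).filter fun p => decide (p.1 ∉ D) := List.mem_of_getElem? hp
  have hpe : p ∈ (List.range a.length).zip a := List.mem_of_mem_filter hpmem
  obtain ⟨j, hj, hje⟩ := List.mem_iff_getElem.mp hpe
  rw [List.getElem_zip, List.getElem_range] at hje
  rw [deleteAt, List.getElem?_map, hp]
  have hj' : j < a.length := by simpa using hj
  have h1 : i = j := by rw [← hje] at hpi; simpa using hpi.symm
  have h2 : p.2 = a[j] := by rw [← hje]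
  rw [h1, List.getElem?_eq_getElem hj', Option.map_some, h2]

private lemma isMatch_length_le {σ : Type*} {a b : List σ} {J : List (ℕ × ℕ)}
    (h : IsMatch a b J) : J.length ≤ a.length := by
  classical
  haveI : IsTrans (ℕ × ℕ) (fun p q : ℕ × ℕ => p.1 < q.1 ∧ p.2 < q.2) :=
    ⟨fun _ _ _ h1 h2 => ⟨h1.1.trans h2.1, h1.2.trans h2.2⟩⟩
  have hpw : J.Pairwise (fun p q : ℕ × ℕ => p.1 < q.1 ∧ p.2 < q.2) :=
    List.isChain_iff_pairwise.mp h.1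
  have hnd : (J.map Prod.fst).Nodup :=
    List.pairwise_map.mpr (hpw.imp fun hh => Nat.ne_of_lt hh.1)
  have hle : (J.map Prod.fst).length ≤ (Finset.range a.length).card := by
    refine length_le_card hnd ?_
    intro x hx
    obtain ⟨p, hp, rfl⟩ := List.mem_map.mp hx
    exact Finset.mem_range.mpr (h.2 p hp).1
  simpa using hle

private lemma bddAbove_matchSet {σ : Type*} (a b : List σ) :
    BddAbove {r | ∃ I, IsMatch a b I ∧ I.length = r} := by
  refine ⟨a.length, fun r hr => ?_⟩
  obtain ⟨J, hJ, rfl⟩ := hr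
  exact isMatch_length_le hJ

end AuxDeleteAt

/-- Suppose `ta` and `tb` are obtained from `a` and `b` by deleting the
terms at index sets `Da` and `Db` with `|Da| + |Db| ≤ ⌊γ(n+m)⌋`, where `0 < γ < 1`.
If there is a best possible match `I` between `a` and `b` such that no deleted term is
matched by `I` with a non-deleted term, then `f̄(a,b) ≥ f̄(ta,tb) − γ`. -/
theorem statement1 {σ : Type*} (γ : ℝ) (hγ0 : 0 < γ) (hγ1 : γ < 1)
    (a b : List σ) (Da Db : Finset ℕ)
    (hDa : ∀ i ∈ Da, i < a.length) (hDb : ∀ j ∈ Db, j < b.length)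
    (hcount : Da.card + Db.card ≤ ⌊γ * ((a.length : ℝ) + b.length)⌋₊)
    (I : List (ℕ × ℕ)) (hI : IsMatch a b I) (hbest : I.length = maxMatch a b)
    (hnocross : ∀ p ∈ I, p.1 ∈ Da ↔ p.2 ∈ Db) :
    fbar (deleteAt a Da) (deleteAt b Db) - γ ≤ fbar a b := by
  classical
  have hcardA : Da.card ≤ a.length := by
    have hsub : Da ⊆ Finset.range a.length := fun i hi => Finset.mem_range.mpr (hDa i hi)
    simpa using Finset.card_le_card hsub
  have hcardB : Db.card ≤ b.length := by
    have hsub : Db ⊆ Finset.range b.length := fun i hi => Finset.mem_range.mpr (hDb i hi)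
    simpa using Finset.card_le_card hsub
  haveI : IsTrans (ℕ × ℕ) (fun p q : ℕ × ℕ => p.1 < q.1 ∧ p.2 < q.2) :=
    ⟨fun _ _ _ h1 h2 => ⟨h1.1.trans h2.1, h1.2.trans h2.2⟩⟩
  have hPI : I.Pairwise (fun p q : ℕ × ℕ => p.1 < q.1 ∧ p.2 < q.2) :=
    List.isChain_iff_pairwise.mp hI.1
  set P : ℕ × ℕ → Bool := fun p => decide (p.1 ∉ Da) with hP
  have hsplit := List.length_eq_length_filter_add (l := I) P
  set I1 := I.filter P with hI1def
  set I0 := I.filter (fun p => !P p) with hI0def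
  have hI0mem : ∀ p ∈ I0, p.1 ∈ Da ∧ p.2 ∈ Db := by
    intro p hp
    have hpI : p ∈ I := List.mem_of_mem_filter hp
    have h1 : p.1 ∈ Da := by
      have := List.of_mem_filter hp
      simpa [hP] using this
    exact ⟨h1, (hnocross p hpI).mp h1⟩
  have hI1mem : ∀ p ∈ I1, p.1 ∉ Da ∧ p.2 ∉ Db ∧ p.1 < a.length ∧ p.2 < b.length ∧
      a[p.1]? = b[p.2]? := by
    intro p hp
    have hpI : p ∈ I := List.mem_of_mem_filter hp
    have h1 : p.1 ∉ Da := by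
      have := List.of_mem_filter hp
      simpa [hP] using this
    have h2 : p.2 ∉ Db := fun h => h1 ((hnocross p hpI).mpr h)
    obtain ⟨h3, h4, h5⟩ := hI.2 p hpI
    exact ⟨h1, h2, h3, h4, h5⟩
  have hPI0 : I0.Pairwise (fun p q : ℕ × ℕ => p.1 < q.1 ∧ p.2 < q.2) := hPI.filter _
  have hr1 : I0.length ≤ Da.card := by
    have hnd : (I0.map Prod.fst).Nodup :=
      List.pairwise_map.mpr (hPI0.imp fun hh => Nat.ne_of_lt hh.1)
    have := length_le_card hnd (fun x hx => by
      obtain ⟨p, hp, rfl⟩ := List.mem_map.mp hx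
      exact (hI0mem p hp).1)
    simpa using this
  have hr2 : I0.length ≤ Db.card := by
    have hnd : (I0.map Prod.snd).Nodup :=
      List.pairwise_map.mpr (hPI0.imp fun hh => Nat.ne_of_lt hh.2)
    have := length_le_card hnd (fun x hx => by
      obtain ⟨p, hp, rfl⟩ := List.mem_map.mp hx
      exact (hI0mem p hp).2)
    simpa using this
  -- the induced match between the deleted strings
  have hmatch' : IsMatch (deleteAt a Da) (deleteAt b Db)
      (I1.map (fun p => (embD Da p.1, embD Db p.2))) := by
    constructor
    · apply List.Pairwise.isChain
      rw [List.pairwise_map]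
      refine List.Pairwise.imp_of_mem ?_ (hPI.filter P)
      intro p q hp hq hpq
      obtain ⟨hp1, hp2, -, -, -⟩ := hI1mem p hp
      exact ⟨embD_strictMono hpq.1 hp1, embD_strictMono hpq.2 hp2⟩
    · intro q hq
      obtain ⟨p, hp, rfl⟩ := List.mem_map.mp hq
      obtain ⟨h1, h2, h3, h4, h5⟩ := hI1mem p hp
      have ea := deleteAt_getElem? a Da (idxsL_getElem_embD h3 h1)
      have eb := deleteAt_getElem? b Db (idxsL_getElem_embD h4 h2)
      refine ⟨?_, ?_, ?_⟩
      · rw [length_deleteAt_eq]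
        exact embD_lt_length h3 h1
      · rw [length_deleteAt_eq]
        exact embD_lt_length h4 h2
      · dsimp only
        rw [ea, eb, h5]
  have hM' : I1.length ≤ maxMatch (deleteAt a Da) (deleteAt b Db) := by
    refine le_csSup (bddAbove_matchSet _ _) ?_
    exact ⟨_, hmatch', by simp⟩
  -- arithmetic
  have hlen_ta : (deleteAt a Da).length = a.length - Da.card := by
    rw [length_deleteAt_eq, idxsL_length hDa]
  have hlen_tb : (deleteAt b Db).length = b.length - Db.card := by
    rw [length_deleteAt_eq, idxsL_length hDb]
  rw [fbar, fbar, hlen_ta, hlen_tb, ← hbest]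
  rcases Nat.eq_zero_or_pos (a.length + b.length) with h0 | hpos
  · have hn : a.length = 0 := by omega
    have hm : b.length = 0 := by omega
    have hda : Da.card = 0 := by omega
    have hdb : Db.card = 0 := by omega
    rw [hn, hm, hda, hdb]
    norm_num
    linarith
  · have hN : (0:ℝ) < (a.length : ℝ) + b.length := by
      have : (0:ℝ) < ((a.length + b.length : ℕ) : ℝ) := by exact_mod_cast hpos
      push_cast at this
      linarith
    have hd : ((Da.card : ℝ) + Db.card) ≤ γ * ((a.length : ℝ) + b.length) := by
      have h1 : ((Da.card + Db.card : ℕ) : ℝ) ≤ (⌊γ * ((a.length : ℝ) + b.length)⌋₊ : ℝ) :=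
        Nat.cast_le.mpr hcount
      have h2 : (⌊γ * ((a.length : ℝ) + b.length)⌋₊ : ℝ) ≤ γ * ((a.length : ℝ) + b.length) :=
        Nat.floor_le (by positivity)
      push_cast at h1
      linarith
    have hdN : (Da.card : ℝ) + Db.card < (a.length : ℝ) + b.length := by nlinarith
    rw [Nat.cast_sub hcardA, Nat.cast_sub hcardB]
    set N : ℝ := (a.length : ℝ) + b.length with hNdef
    set M' : ℝ := (maxMatch (deleteAt a Da) (deleteAt b Db) : ℝ) with hM'def
    have hN' : (0:ℝ) < ((a.length : ℝ) - Da.card) + ((b.length : ℝ) - Db.card) := by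
      linarith [hdN]
    set N' : ℝ := ((a.length : ℝ) - Da.card) + ((b.length : ℝ) - Db.card) with hN'def
    have hNN' : N = N' + ((Da.card : ℝ) + Db.card) := by rw [hNdef, hN'def]; ring
    have hM_le : (I.length : ℝ) ≤ (I1.length : ℝ) + (I0.length : ℝ) := by
      exact_mod_cast hsplit.le
    have h2r : 2 * (I0.length : ℝ) ≤ (Da.card : ℝ) + Db.card := by
      have : 2 * I0.length ≤ Da.card + Db.card := by omega
      exact_mod_cast this
    have hM'ge : (I1.length : ℝ) ≤ M' := by rw [hM'def]; exact_mod_cast hM'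
    have hM'0 : (0:ℝ) ≤ M' := by rw [hM'def]; positivity
    have hI00 : (0:ℝ) ≤ (I0.length : ℝ) := by positivity
    have key : 2 * (I.length : ℝ) * N' ≤ (2 * M' + γ * N') * N := by
      have e1 : (0:ℝ) ≤ M' * ((Da.card : ℝ) + Db.card) := by positivity
      have e2 : (0:ℝ) ≤ (((Da.card : ℝ) + Db.card) - 2 * (I0.length : ℝ)) * N' :=
        mul_nonneg (by linarith) hN'.le
      have e3 : (0:ℝ) ≤ (γ * N - ((Da.card : ℝ) + Db.card)) * N' :=
        mul_nonneg (by linarith) hN'.le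
      have e4 : (0:ℝ) ≤ (M' + (I0.length : ℝ) - (I.length : ℝ)) * N' :=
        mul_nonneg (by linarith) hN'.le
      have e5 : M' * N = M' * N' + M' * ((Da.card : ℝ) + Db.card) := by rw [hNN']; ring
      linarith [e1, e2, e3, e4, e5]
    have h2 : 2 * (I.length : ℝ) / N ≤ 2 * M' / N' + γ := by
      rw [div_add' _ _ _ hN'.ne', div_le_div_iff₀ hN hN']
      linarith [key]
    linarith [h2]
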